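/- arXiv:2210.08575 — 4 statements merged into one kernel-verified Lean document; each statement's English description precedes it below -/
import Mathlib

section
/- Let S be lower unitriangular with expansion S = I + Λᵀ S^{[1]} + (Λᵀ)² S^{[2]} + ⋯ and inverse S^{-1} = I + Λᵀ S^{[-1]} + (Λᵀ)² S^{[-2]} + (Λᵀ)³ S^{[-3]} + ⋯. Then S^{[-3]} = −S^{[3]} + (T₋S^{[2]}) S^{[1]} + (T₋² S^{[1]}) S^{[2]} − (T₋² S^{[1]})(T₋ S^{[1]}) S^{[1]}. -/
/-- For a lower unitriangular semi-infinite matrix S with inverse S⁻¹, the third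
subdiagonal of the inverse satisfies
S^{[-3]} = −S^{[3]} + (T₋S^{[2]})S^{[1]} + (T₋²S^{[1]})S^{[2]}
           − (T₋²S^{[1]})(T₋S^{[1]})S^{[1]}. -/
theorem inverse_unitriangular_third_subdiagonal (S T : ℕ → ℕ → ℂ)
    (hSdiag : ∀ n, S n n = 1) (hSlow : ∀ n m, n < m → S n m = 0)
    (hTdiag : ∀ n, T n n = 1) (hTlow : ∀ n m, n < m → T n m = 0)
    (hinv : ∀ n m : ℕ, m ≤ n →
      (∑ k ∈ Finset.Icc m n, S n k * T k m) = if n = m then 1 else 0) :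
    ∀ n : ℕ,
      T (n + 3) n
        = -S (n + 3) n + S (n + 3) (n + 1) * S (n + 1) n
          + S (n + 3) (n + 2) * S (n + 2) n
          - S (n + 3) (n + 2) * S (n + 2) (n + 1) * S (n + 1) n := by
  intro n
  have h1 := hinv (n+1) n (by omega)
  have h2 := hinv (n+2) n (by omega)
  have h3 := hinv (n+3) n (by omega)
  have e1 : Finset.Icc n (n+1) = {n, n+1} := by
    ext k; simp [Finset.mem_Icc]; omega
  have e2 : Finset.Icc n (n+2) = {n, n+1, n+2} := by
    ext k; simp [Finset.mem_Icc]; omega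
  have e3 : Finset.Icc n (n+3) = {n, n+1, n+2, n+3} := by
    ext k; simp [Finset.mem_Icc]; omega
  rw [e1] at h1; rw [e2] at h2; rw [e3] at h3
  simp [Finset.sum_insert, hSdiag, hTdiag] at h1 h2 h3
  linear_combination h3 - S (n+3) (n+2) * h2 - (S (n+3) (n+1) - S (n+3) (n+2) * S (n+2) (n+1)) * h1
end

section
/- Let B be the lower Pascal matrix, S a lower unitriangular semi-infinite matrix, and Π = S B S^{-1}, Π^{-1} = S B^{-1} S^{-1} the dressed Pascal matrices with expansions Π^{±1} = I + Λᵀ π^{[±1]} + (Λᵀ)² π^{[±2]} + ⋯ (π^{[±k]} diagonal). Then π^{[1]} + π^{[-1]} = 0 and π^{[2]} + π^{[-2]} = 2 D^{[2]}, where D^{[2]}_n = (n+2)(n+1)/2. -/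
/-- For the dressed Pascal matrices Pi = S B S⁻¹ and Pi⁻¹ = S B⁻¹ S⁻¹ (S lower
unitriangular, B the Pascal matrix), the subdiagonals satisfy
π^{[1]} + π^{[-1]} = 0 and π^{[2]} + π^{[-2]} = 2D^{[2]}, with
D^{[2]}_n = (n+2)(n+1)/2. -/
theorem dressed_pascal_subdiagonal_sums (S T : ℕ → ℕ → ℂ)
    (hSdiag : ∀ n, S n n = 1) (hSlow : ∀ n m, n < m → S n m = 0)
    (hTdiag : ∀ n, T n n = 1) (hTlow : ∀ n m, n < m → T n m = 0)
    (hinv : ∀ n m : ℕ, m ≤ n →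
      (∑ k ∈ Finset.Icc m n, S n k * T k m) = if n = m then 1 else 0)
    (Pi Pi' : ℕ → ℕ → ℂ)
    (hPi : ∀ n m : ℕ, Pi n m =
      ∑ k ∈ Finset.Icc m n, ∑ j ∈ Finset.Icc m k, S n k * (k.choose j : ℂ) * T j m)
    (hPi' : ∀ n m : ℕ, Pi' n m =
      ∑ k ∈ Finset.Icc m n, ∑ j ∈ Finset.Icc m k,
        S n k * ((-1 : ℂ) ^ (k + j) * (k.choose j : ℂ)) * T j m) :
    ∀ n : ℕ,
      Pi (n + 1) n + Pi' (n + 1) n = 0 ∧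
      Pi (n + 2) n + Pi' (n + 2) n = (n + 2) * (n + 1) := by
  intro n
  have h1 := hinv (n+1) n (by omega)
  have h2 := hinv (n+2) n (by omega)
  have e1 := hPi (n+1) n
  have e2 := hPi (n+2) n
  have e1' := hPi' (n+1) n
  have e2' := hPi' (n+2) n
  have hc : (Nat.choose (n+2) n : ℂ) * 2 = (n+2) * (n+1) := by
    have h : (n+2).choose n * 2 = (n+2) * (n+1) := by
      have h := Nat.choose_symm (n := n+2) (k := n) (by omega)
      simp only [show n + 2 - n = 2 from by omega] at h
      have hdvd : 2 ∣ (n+2) * (n+1) := by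
        simpa [Nat.mul_comm] using (Nat.even_mul_succ_self (n+1)).two_dvd
      rw [← h, Nat.choose_two_right, show n+2-1 = n+1 from rfl,
        Nat.div_mul_cancel hdvd]
    exact_mod_cast congrArg (Nat.cast : ℕ → ℂ) h
  have s1 : Finset.Icc n (n+1) = {n, n+1} := by
    ext x; simp [Finset.mem_Icc]; omega
  have s2 : Finset.Icc n (n+2) = {n, n+1, n+2} := by
    ext x; simp [Finset.mem_Icc]; omega
  have p2 : ∀ f : ℕ → ℂ, ∑ x ∈ ({n, n+1} : Finset ℕ), f x = f n + f (n+1) :=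
    fun f => Finset.sum_pair (by omega)
  have p3 : ∀ f : ℕ → ℂ, ∑ x ∈ ({n, n+1, n+2} : Finset ℕ), f x
      = f n + (f (n+1) + f (n+2)) := fun f => by
    rw [Finset.sum_insert (by simp only [Finset.mem_insert, Finset.mem_singleton]; omega),
      Finset.sum_pair (by omega)]
  simp only [s1, s2, Finset.Icc_self, Finset.sum_singleton, p2, p3] at h1 h2 e1 e2 e1' e2'
  simp only [hSdiag, hTdiag, Nat.choose_self, Nat.choose_succ_self_right,
    if_neg (show n+1 ≠ n from by omega), if_neg (show n+2 ≠ n from by omega)]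
    at h1 h2 e1 e2 e1' e2'
  constructor
  · rw [e1, e1']
    rw [show n+n = 2*n from by ring, show n+1+n = 2*n+1 from by ring,
      show n+1+(n+1) = 2*(n+1) from by ring]
    simp only [pow_succ, pow_mul, neg_one_sq, one_pow, one_mul]
    linear_combination 2 * h1
  · rw [e2, e2']
    rw [show n+n = 2*n from by ring, show n+1+n = 2*n+1 from by ring,
      show n+1+(n+1) = 2*(n+1) from by ring, show n+2+n = 2*(n+1) from by ring,
      show n+2+(n+1) = 2*(n+1)+1 from by ring, show n+2+(n+2) = 2*(n+2) from by ring]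
    simp only [pow_succ, pow_mul, neg_one_sq, one_pow, one_mul]
    push_cast
    linear_combination 2 * h2 + hc
end

section
/- With Π = SBS^{-1} as above and P(z) = Sχ(z) the monic polynomial sequence determined by S (so P_n(z) = z^n + p¹_n z^{n-1} + ⋯), the first subdiagonal of Π satisfies π^{[1]}_n = n+1 and the second subdiagonal satisfies π^{[2]}_n = (n+2)(n+1)/2 + p¹_{n+2}(n+1) − (n+2) p¹_{n+1} for all n ≥ 0. -/
/-- For the dressed Pascal matrix Pi = S B S⁻¹, with P(z) = Sχ(z) the monic
polynomial sequence (so p¹_n = S_{n,n-1}), the subdiagonals satisfy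
π^{[1]}_n = n+1 and π^{[2]}_n = (n+2)(n+1)/2 + (n+1)p¹_{n+2} − (n+2)p¹_{n+1}. -/
theorem dressed_pascal_entries (S T : ℕ → ℕ → ℂ)
    (hSdiag : ∀ n, S n n = 1) (hSlow : ∀ n m, n < m → S n m = 0)
    (hTdiag : ∀ n, T n n = 1) (hTlow : ∀ n m, n < m → T n m = 0)
    (hinv : ∀ n m : ℕ, m ≤ n →
      (∑ k ∈ Finset.Icc m n, S n k * T k m) = if n = m then 1 else 0)
    (Pi : ℕ → ℕ → ℂ)
    (hPi : ∀ n m : ℕ, Pi n m =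
      ∑ k ∈ Finset.Icc m n, ∑ j ∈ Finset.Icc m k, S n k * (k.choose j : ℂ) * T j m)
    (p1 : ℕ → ℂ)
    (hp1 : ∀ n : ℕ, p1 n = if n = 0 then 0 else S n (n - 1)) :
    ∀ n : ℕ,
      Pi (n + 1) n = (n : ℂ) + 1 ∧
      Pi (n + 2) n = ((n : ℂ) + 2) * ((n : ℂ) + 1) / 2
        + p1 (n + 2) * ((n : ℂ) + 1) - ((n : ℂ) + 2) * p1 (n + 1) := by
  intro n
  have hne1 : n + 1 ≠ n := by omega
  have hne2 : n + 2 ≠ n := by omega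
  have hT1 : T (n+1) n = -S (n+1) n := by
    have h := hinv (n+1) n (by omega)
    rw [Finset.sum_Icc_succ_top (by omega), Finset.Icc_self, Finset.sum_singleton] at h
    simp only [hSdiag, hTdiag, if_neg hne1] at h
    linear_combination h
  have hT2 : T (n+2) n = -S (n+2) n + S (n+2) (n+1) * S (n+1) n := by
    have h := hinv (n+2) n (by omega)
    rw [Finset.sum_Icc_succ_top (by omega), Finset.sum_Icc_succ_top (by omega),
      Finset.Icc_self, Finset.sum_singleton] at h
    simp only [hSdiag, hTdiag, hT1, if_neg hne2] at h
    linear_combination h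
  have hc2 : (((n+2).choose n : ℕ) : ℂ) = ((n:ℂ)+2)*((n:ℂ)+1)/2 := by
    have h1 : (n+2).choose n = (n+2).choose 2 := by
      have := Nat.choose_symm (show n ≤ n + 2 by omega) (n := n + 2)
      simpa using this.symm
    rw [h1, Nat.cast_choose_two]
    push_cast
    ring
  constructor
  · rw [hPi]
    rw [Finset.sum_Icc_succ_top (by omega),
      Finset.sum_Icc_succ_top (show n ≤ n + 1 by omega)]
    simp only [Finset.Icc_self, Finset.sum_singleton]
    simp only [hSdiag, hTdiag, hT1, Nat.choose_self, Nat.choose_succ_self_right]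
    push_cast
    ring
  · rw [hPi]
    rw [Finset.sum_Icc_succ_top (by omega), Finset.sum_Icc_succ_top (by omega),
      Finset.sum_Icc_succ_top (show n ≤ n + 1 by omega),
      Finset.sum_Icc_succ_top (show n ≤ n + 2 by omega),
      Finset.sum_Icc_succ_top (show n ≤ n + 1 by omega)]
    simp only [Finset.Icc_self, Finset.sum_singleton]
    simp only [hSdiag, hTdiag, hT1, hT2, Nat.choose_self, Nat.choose_succ_self_right, hc2,
      hp1, Nat.add_sub_cancel, if_neg (Nat.succ_ne_zero _), if_neg (Nat.succ_ne_zero _)]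
    push_cast
    ring
end

section
/- Let w: ℕ → (0,∞) satisfy the Pearson equation θ(k+1) w(k+1) = η κ(k) w(k) for all k ∈ ℕ, where θ, κ are polynomials independent of η and η > 0, and suppose the moments ρ_n(η) = Σ_k k^n w(k) all converge and depend smoothly on η with all Hankel determinants nonzero. Then the monic orthogonal polynomials satisfy ϑ_η P_n(z) = −γ_n P_{n-1}(z) for n ≥ 1; in particular the subleading coefficients satisfy ϑ_η p¹_n = −γ_n. -/
open Polynomial

private lemma todaAux_tsum_c (v : ℕ → ℝ)
    (hconv : ∀ n : ℕ, ∀ η : ℝ, 0 < η → Summable (fun k : ℕ => (k : ℝ) ^ n * v k * η ^ k))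
    (c : ℕ → ℝ) (N m : ℕ) {η : ℝ} (hη : 0 < η) :
    ∑' k : ℕ, (∑ i ∈ Finset.range N, c i * (k : ℝ) ^ i) * (k : ℝ) ^ m * v k * η ^ k
      = ∑ i ∈ Finset.range N, c i * ∑' k : ℕ, (k : ℝ) ^ (i + m) * v k * η ^ k := by
  have h : ∀ k : ℕ, (∑ i ∈ Finset.range N, c i * (k : ℝ) ^ i) * (k : ℝ) ^ m * v k * η ^ k
      = ∑ i ∈ Finset.range N, c i * ((k : ℝ) ^ (i + m) * v k * η ^ k) := by
    intro k
    rw [Finset.sum_mul, Finset.sum_mul, Finset.sum_mul]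
    exact Finset.sum_congr rfl fun i _ => by rw [pow_add]; ring
  rw [tsum_congr h, Summable.tsum_finsetSum fun i _ => (hconv (i + m) η hη).mul_left _]
  exact Finset.sum_congr rfl fun i _ => tsum_mul_left

private lemma todaAux_summable (v : ℕ → ℝ)
    (hconv : ∀ n : ℕ, ∀ η : ℝ, 0 < η → Summable (fun k : ℕ => (k : ℝ) ^ n * v k * η ^ k))
    (q : Polynomial ℝ) (m : ℕ) {η : ℝ} (hη : 0 < η) :
    Summable (fun k : ℕ => q.eval (k : ℝ) * (k : ℝ) ^ m * v k * η ^ k) := by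
  have h : ∀ k : ℕ, q.eval (k : ℝ) * (k : ℝ) ^ m * v k * η ^ k
      = ∑ i ∈ Finset.range (q.natDegree + 1), q.coeff i * ((k : ℝ) ^ (i + m) * v k * η ^ k) := by
    intro k
    rw [Polynomial.eval_eq_sum_range, Finset.sum_mul, Finset.sum_mul, Finset.sum_mul]
    exact Finset.sum_congr rfl fun i _ => by rw [pow_add]; ring
  exact (summable_sum fun i _ => ((hconv (i + m) η hη).mul_left (q.coeff i))).congr
    fun k => (h k).symm

private lemma todaAux_mom (v : ℕ → ℝ)
    (hconv : ∀ n : ℕ, ∀ η : ℝ, 0 < η → Summable (fun k : ℕ => (k : ℝ) ^ n * v k * η ^ k))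
    (r : Polynomial ℝ) (m : ℕ) {η : ℝ} (hη : 0 < η) :
    ∑' k : ℕ, r.eval (k : ℝ) * (k : ℝ) ^ m * v k * η ^ k
      = ∑ i ∈ Finset.range (r.natDegree + 1), r.coeff i
          * ∑' k : ℕ, (k : ℝ) ^ (i + m) * v k * η ^ k := by
  rw [← todaAux_tsum_c v hconv (fun i => r.coeff i) (r.natDegree + 1) m hη]
  exact tsum_congr fun k => by rw [Polynomial.eval_eq_sum_range]

private lemma todaAux_expand (v : ℕ → ℝ)
    (hconv : ∀ n : ℕ, ∀ η : ℝ, 0 < η → Summable (fun k : ℕ => (k : ℝ) ^ n * v k * η ^ k))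
    (q r : Polynomial ℝ) {η : ℝ} (hη : 0 < η) :
    ∑' k : ℕ, (q * r).eval (k : ℝ) * (k : ℝ) ^ 0 * v k * η ^ k
      = ∑ i ∈ Finset.range (r.natDegree + 1), r.coeff i
          * ∑' k : ℕ, q.eval (k : ℝ) * (k : ℝ) ^ i * v k * η ^ k := by
  have h : ∀ k : ℕ, (q * r).eval (k : ℝ) * (k : ℝ) ^ 0 * v k * η ^ k
      = ∑ i ∈ Finset.range (r.natDegree + 1), r.coeff i
          * (q.eval (k : ℝ) * (k : ℝ) ^ i * v k * η ^ k) := by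
    intro k
    rw [Polynomial.eval_mul, Polynomial.eval_eq_sum_range (p := r),
      Finset.mul_sum, Finset.sum_mul, Finset.sum_mul, Finset.sum_mul]
    exact Finset.sum_congr rfl fun i _ => by ring
  rw [tsum_congr h, Summable.tsum_finsetSum fun i _ => (todaAux_summable v hconv q i hη).mul_left _]
  exact Finset.sum_congr rfl fun i _ => tsum_mul_left

private lemma todaAux_pos (v : ℕ → ℝ) (hv : ∀ k, 0 < v k)
    (hconv : ∀ n : ℕ, ∀ η : ℝ, 0 < η → Summable (fun k : ℕ => (k : ℝ) ^ n * v k * η ^ k))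
    (q : Polynomial ℝ) (hq : q ≠ 0) {η : ℝ} (hη : 0 < η) :
    0 < ∑' k : ℕ, (q * q).eval (k : ℝ) * (k : ℝ) ^ 0 * v k * η ^ k := by
  have hnr : ¬ (Set.range ((↑) : ℕ → ℝ) ⊆ { x | q.IsRoot x }) := fun hsub =>
    (Set.infinite_range_of_injective Nat.cast_injective)
      ((Polynomial.finite_setOf_isRoot hq).subset hsub)
  obtain ⟨x, hx, hk₀⟩ := Set.not_subset.mp hnr
  obtain ⟨k₀, rfl⟩ := hx
  refine Summable.tsum_pos (todaAux_summable v hconv (q * q) 0 hη) (fun k => ?_) k₀ ?_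
  · rw [Polynomial.eval_mul]
    have h1 : (0:ℝ) ≤ q.eval (k : ℝ) * q.eval (k : ℝ) := mul_self_nonneg _
    have h2 : (0:ℝ) ≤ (k : ℝ) ^ 0 := by norm_num
    exact mul_nonneg (mul_nonneg (mul_nonneg h1 h2) (hv k).le) (pow_pos hη k).le
  · rw [Polynomial.eval_mul]
    have h1 : (0:ℝ) < q.eval (k₀ : ℝ) * q.eval (k₀ : ℝ) :=
      mul_self_pos.mpr (fun h => hk₀ h)
    have h2 : (0:ℝ) < (k₀ : ℝ) ^ 0 := by norm_num
    exact mul_pos (mul_pos (mul_pos h1 h2) (hv k₀)) (pow_pos hη k₀)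

private lemma todaAux_deriv (v : ℕ → ℝ) (hv : ∀ k, 0 < v k)
    (hconv : ∀ n : ℕ, ∀ η : ℝ, 0 < η → Summable (fun k : ℕ => (k : ℝ) ^ n * v k * η ^ k))
    (j : ℕ) {η : ℝ} (hη : 0 < η) :
    HasDerivAt (fun x : ℝ => ∑' k : ℕ, (k : ℝ) ^ j * v k * x ^ k)
      ((∑' k : ℕ, (k : ℝ) ^ (j + 1) * v k * η ^ k) / η) η := by
  set b : ℝ := η + 1 with hb
  have hb0 : 0 < b := by positivity
  have hbne : b ≠ 0 := ne_of_gt hb0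
  have hub : Summable (fun k : ℕ => (k : ℝ) ^ (j + 1) * v k * b ^ k / b) :=
    (hconv (j + 1) b hb0).div_const b
  have hmem : η ∈ Set.Ioo (0 : ℝ) b := ⟨hη, by simp [hb]⟩
  have key := hasDerivAt_tsum_of_isPreconnected hub (isOpen_Ioo (a := (0:ℝ)) (b := b))
    (isPreconnected_Ioo)
    (g := fun (k : ℕ) (x : ℝ) => (k : ℝ) ^ j * v k * x ^ k)
    (g' := fun (k : ℕ) (x : ℝ) => (k : ℝ) ^ j * v k * ((k : ℝ) * x ^ (k - 1)))
    (fun k x _ => (hasDerivAt_pow k x).const_mul ((k : ℝ) ^ j * v k))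
    (fun k x hx => ?_) hmem (hconv j η hη) hmem
  · refine key.congr_deriv ?_
    rw [← tsum_div_const]
    refine tsum_congr fun k => ?_
    cases k with
    | zero => simp
    | succ t =>
      simp only [Nat.add_sub_cancel]
      field_simp
      ring
  · have hx0 : (0:ℝ) < x := hx.1
    have hxb : x ≤ b := le_of_lt hx.2
    rw [Real.norm_eq_abs, abs_of_nonneg (mul_nonneg (mul_nonneg (pow_nonneg (Nat.cast_nonneg k) j)
      (hv k).le) (mul_nonneg (Nat.cast_nonneg k) (pow_nonneg hx0.le _)))]
    have h1 : (k : ℝ) * x ^ (k - 1) ≤ (k : ℝ) * b ^ (k - 1) :=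
      mul_le_mul_of_nonneg_left (pow_le_pow_left₀ hx0.le hxb _) (Nat.cast_nonneg k)
    have h2 : (k : ℝ) ^ j * v k * ((k : ℝ) * x ^ (k - 1))
        ≤ (k : ℝ) ^ j * v k * ((k : ℝ) * b ^ (k - 1)) :=
      mul_le_mul_of_nonneg_left h1 (mul_nonneg (pow_nonneg (Nat.cast_nonneg k) j) (hv k).le)
    refine h2.trans_eq ?_
    cases k with
    | zero => simp
    | succ t =>
      simp only [Nat.add_sub_cancel]
      field_simp
      push_cast
      ring

/-- For a weight w(k) = v(k)η^k on ℕ satisfying the Pearson equation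
θ(k+1)w(k+1) = ηκ(k)w(k), with convergent moments smoothly depending on η and
nonvanishing Hankel determinants, the monic orthogonal polynomials satisfy
ϑ_η P_n = −γ_n P_{n-1} for n ≥ 1; in particular ϑ_η p¹_n = −γ_n. -/
theorem toda_flow_polynomials (v : ℕ → ℝ) (hv : ∀ k, 0 < v k)
    (θ κ : Polynomial ℝ)
    (hPearson : ∀ η : ℝ, 0 < η → ∀ k : ℕ,
      θ.eval ((k : ℝ) + 1) * (v (k + 1) * η ^ (k + 1))
        = η * κ.eval (k : ℝ) * (v k * η ^ k))
    (hconv : ∀ n : ℕ, ∀ η : ℝ, 0 < η → Summable (fun k : ℕ => (k : ℝ) ^ n * v k * η ^ k))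
    (hsmooth : ∀ n : ℕ, DifferentiableOn ℝ (fun η : ℝ => ∑' k : ℕ, (k : ℝ) ^ n * v k * η ^ k)
      (Set.Ioi 0))
    (hΔ : ∀ η : ℝ, 0 < η → ∀ N : ℕ,
      (Matrix.of fun i j : Fin N =>
        ∑' k : ℕ, (k : ℝ) ^ ((i : ℕ) + (j : ℕ)) * v k * η ^ k).det ≠ 0)
    (P : ℝ → ℕ → Polynomial ℝ) (β γ : ℕ → ℝ → ℝ)
    (hmonic : ∀ η : ℝ, 0 < η → ∀ n, (P η n).Monic ∧ (P η n).natDegree = n)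
    (horth : ∀ η : ℝ, 0 < η → ∀ n, ∀ m < n,
      ∑' k : ℕ, (P η n).eval (k : ℝ) * (k : ℝ) ^ m * v k * η ^ k = 0)
    (hrec : ∀ η : ℝ, 0 < η → ∀ n : ℕ, 1 ≤ n →
      X * P η n = P η (n + 1) + C (β n η) * P η n + C (γ n η) * P η (n - 1))
    (hcoeffdiff : ∀ n i : ℕ, DifferentiableOn ℝ (fun η : ℝ => (P η n).coeff i) (Set.Ioi 0))
    (p1 : ℕ → ℝ → ℝ)
    (hp1 : ∀ n η, p1 n η = if n = 0 then 0 else (P η n).coeff (n - 1)) :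
    ∀ n : ℕ, 1 ≤ n → ∀ η : ℝ, 0 < η →
      (∀ i : ℕ, η * deriv (fun x : ℝ => (P x n).coeff i) η = -γ n η * (P η (n - 1)).coeff i)
      ∧ η * deriv (p1 n) η = -γ n η := by
  intro n hn η hη
  rcases n with _ | m
  · omega
  clear hn hsmooth hΔ hPearson θ κ
  simp only [Nat.add_sub_cancel, Nat.succ_sub_one]
  have hηne : η ≠ 0 := ne_of_gt hη
  have hsumm : ∀ (q : Polynomial ℝ) (m' : ℕ),
      Summable (fun k : ℕ => q.eval (k : ℝ) * (k : ℝ) ^ m' * v k * η ^ k) :=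
    fun q m' => todaAux_summable v hconv q m' hη
  -- positivity of the squared norms
  have hposS : ∀ N : ℕ, 0 < ∑' k : ℕ, (P η N).eval (k : ℝ) * (k : ℝ) ^ N * v k * η ^ k := by
    intro N
    obtain ⟨hmon, hdeg⟩ := hmonic η hη N
    have hsplit : ∀ k : ℕ, (P η N).eval (k : ℝ) * (k : ℝ) ^ N * v k * η ^ k
        = ((P η N) * (X ^ N - P η N)).eval (k : ℝ) * (k : ℝ) ^ 0 * v k * η ^ k
          + ((P η N) * (P η N)).eval (k : ℝ) * (k : ℝ) ^ 0 * v k * η ^ k := by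
      intro k
      simp only [Polynomial.eval_mul, Polynomial.eval_sub, Polynomial.eval_pow,
        Polynomial.eval_X, pow_zero]
      ring
    rw [tsum_congr hsplit, Summable.tsum_add (hsumm _ 0) (hsumm _ 0)]
    have h1 : ∑' k : ℕ, ((P η N) * (X ^ N - P η N)).eval (k : ℝ) * (k : ℝ) ^ 0 * v k * η ^ k
        = 0 := by
      rw [todaAux_expand v hconv _ _ hη]
      refine Finset.sum_eq_zero fun i _ => ?_
      rcases lt_or_ge i N with h | h
      · rw [horth η hη N i h, mul_zero]
      · have hc : (X ^ N - P η N).coeff i = 0 := by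
          rw [Polynomial.coeff_sub, Polynomial.coeff_X_pow]
          rcases eq_or_lt_of_le h with rfl | h'
          · have hc1 : (P η N).coeff N = 1 := by
              have := hmon.coeff_natDegree
              rwa [hdeg] at this
            rw [if_pos rfl, hc1]
            ring
          · rw [if_neg (by omega), Polynomial.coeff_eq_zero_of_natDegree_lt (by omega)]
            ring
        rw [hc, zero_mul]
    rw [h1, zero_add]
    exact todaAux_pos v hv hconv _ hmon.ne_zero hη
  -- the recurrence gives the γ identity
  have hγeq : ∑' k : ℕ, (P η (m + 1)).eval (k : ℝ) * (k : ℝ) ^ (m + 1) * v k * η ^ k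
      = γ (m + 1) η * ∑' k : ℕ, (P η m).eval (k : ℝ) * (k : ℝ) ^ m * v k * η ^ k := by
    have hrec' := hrec η hη (m + 1) (by omega)
    simp only [Nat.add_sub_cancel] at hrec'
    have hk : ∀ k : ℕ, (P η (m + 1)).eval (k : ℝ) * (k : ℝ) ^ (m + 1) * v k * η ^ k
        = (P η (m + 2)).eval (k : ℝ) * (k : ℝ) ^ m * v k * η ^ k
          + β (m + 1) η * ((P η (m + 1)).eval (k : ℝ) * (k : ℝ) ^ m * v k * η ^ k)
          + γ (m + 1) η * ((P η m).eval (k : ℝ) * (k : ℝ) ^ m * v k * η ^ k) := by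
      intro k
      have h0 := congrArg (Polynomial.eval (k : ℝ)) hrec'
      simp only [Polynomial.eval_mul, Polynomial.eval_add, Polynomial.eval_C,
        Polynomial.eval_X] at h0
      calc (P η (m + 1)).eval (k : ℝ) * (k : ℝ) ^ (m + 1) * v k * η ^ k
          = ((k : ℝ) * (P η (m + 1)).eval (k : ℝ)) * (k : ℝ) ^ m * v k * η ^ k := by
            rw [pow_succ]; ring
        _ = _ := by rw [h0]; ring
    rw [tsum_congr hk,
      Summable.tsum_add (Summable.add (hsumm _ m) ((hsumm _ m).mul_left _)) ((hsumm _ m).mul_left _),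
      Summable.tsum_add (hsumm _ m) ((hsumm _ m).mul_left _), tsum_mul_left, tsum_mul_left,
      horth η hη (m + 2) m (by omega), horth η hη (m + 1) m (by omega)]
    simp
  -- coefficients are differentiable
  have hai : ∀ i : ℕ, HasDerivAt (fun x : ℝ => (P x (m + 1)).coeff i)
      (deriv (fun x : ℝ => (P x (m + 1)).coeff i) η) η :=
    fun i => ((hcoeffdiff (m + 1) i).differentiableAt (Ioi_mem_nhds hη)).hasDerivAt
  -- the orthogonality relations, in coefficient form, vanish on Ioi 0
  have hFzero : ∀ m' < m + 1, ∀ x ∈ Set.Ioi (0 : ℝ),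
      ∑ i ∈ Finset.range (m + 1 + 1),
        (P x (m + 1)).coeff i * ∑' k : ℕ, (k : ℝ) ^ (i + m') * v k * x ^ k = 0 := by
    intro m' hm' x hx
    have hx' : 0 < x := hx
    have h := todaAux_mom v hconv (P x (m + 1)) m' hx'
    rw [(hmonic x hx' (m + 1)).2] at h
    rw [← h]
    exact horth x hx' (m + 1) m' hm'
  -- derivative of the coefficient form
  have hFD : ∀ m' : ℕ, HasDerivAt (fun x : ℝ => ∑ i ∈ Finset.range (m + 1 + 1),
        (P x (m + 1)).coeff i * ∑' k : ℕ, (k : ℝ) ^ (i + m') * v k * x ^ k)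
      (∑ i ∈ Finset.range (m + 1 + 1),
        (deriv (fun x : ℝ => (P x (m + 1)).coeff i) η
            * ∑' k : ℕ, (k : ℝ) ^ (i + m') * v k * η ^ k
          + (P η (m + 1)).coeff i
            * ((∑' k : ℕ, (k : ℝ) ^ (i + m' + 1) * v k * η ^ k) / η))) η := by
    intro m'
    exact HasDerivAt.fun_sum fun i _ => (hai i).mul (todaAux_deriv v hv hconv (i + m') hη)
  -- the differentiated orthogonality relations
  have hE : ∀ m' < m + 1, ∑ i ∈ Finset.range (m + 1 + 1),
      (η * deriv (fun x : ℝ => (P x (m + 1)).coeff i) η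
          * ∑' k : ℕ, (k : ℝ) ^ (i + m') * v k * η ^ k
        + (P η (m + 1)).coeff i * ∑' k : ℕ, (k : ℝ) ^ (i + m' + 1) * v k * η ^ k) = 0 := by
    intro m' hm'
    have h0 : HasDerivAt (fun x : ℝ => ∑ i ∈ Finset.range (m + 1 + 1),
        (P x (m + 1)).coeff i * ∑' k : ℕ, (k : ℝ) ^ (i + m') * v k * x ^ k) 0 η :=
      (hasDerivAt_const η (0 : ℝ)).congr_of_eventuallyEq
        (Filter.eventuallyEq_of_mem (Ioi_mem_nhds hη) (fun x hx => hFzero m' hm' x hx))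
    have huniq := (hFD m').unique h0
    have hrw : ∑ i ∈ Finset.range (m + 1 + 1),
        (η * deriv (fun x : ℝ => (P x (m + 1)).coeff i) η
            * ∑' k : ℕ, (k : ℝ) ^ (i + m') * v k * η ^ k
          + (P η (m + 1)).coeff i * ∑' k : ℕ, (k : ℝ) ^ (i + m' + 1) * v k * η ^ k)
        = η * ∑ i ∈ Finset.range (m + 1 + 1),
        (deriv (fun x : ℝ => (P x (m + 1)).coeff i) η
            * ∑' k : ℕ, (k : ℝ) ^ (i + m') * v k * η ^ k
          + (P η (m + 1)).coeff i
            * ((∑' k : ℕ, (k : ℝ) ^ (i + m' + 1) * v k * η ^ k) / η)) := by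
      rw [Finset.mul_sum]
      refine Finset.sum_congr rfl fun i _ => ?_
      field_simp
    rw [hrw, huniq, mul_zero]
  -- the polynomial ϑ P_{m+1}
  obtain ⟨Qp, hQp⟩ : ∃ q : Polynomial ℝ, q = ∑ i ∈ Finset.range (m + 1 + 1),
      C (η * deriv (fun x : ℝ => (P x (m + 1)).coeff i) η) * X ^ i := ⟨_, rfl⟩
  have hQc1 : ∀ i < m + 1 + 1, Qp.coeff i
      = η * deriv (fun x : ℝ => (P x (m + 1)).coeff i) η := by
    intro i hi
    rw [hQp]
    simp only [Polynomial.finset_sum_coeff, Polynomial.coeff_C_mul, Polynomial.coeff_X_pow,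
      mul_ite, mul_one, mul_zero, Finset.sum_ite_eq, Finset.mem_range]
    rw [if_pos (by omega)]
  have hQc2 : ∀ i, m + 1 + 1 ≤ i → Qp.coeff i = 0 := by
    intro i hi
    rw [hQp]
    simp only [Polynomial.finset_sum_coeff, Polynomial.coeff_C_mul, Polynomial.coeff_X_pow,
      mul_ite, mul_one, mul_zero, Finset.sum_ite_eq, Finset.mem_range]
    rw [if_neg (by omega)]
  have hQev : ∀ x : ℝ, Qp.eval x = ∑ i ∈ Finset.range (m + 1 + 1),
      η * deriv (fun x : ℝ => (P x (m + 1)).coeff i) η * x ^ i := by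
    intro x
    rw [hQp]
    simp [Polynomial.eval_finset_sum]
  have hSQ : ∀ m' < m + 1, ∑' k : ℕ, Qp.eval (k : ℝ) * (k : ℝ) ^ m' * v k * η ^ k
      = - ∑' k : ℕ, (P η (m + 1)).eval (k : ℝ) * (k : ℝ) ^ (m' + 1) * v k * η ^ k := by
    intro m' hm'
    have e1 : ∑' k : ℕ, Qp.eval (k : ℝ) * (k : ℝ) ^ m' * v k * η ^ k
        = ∑ i ∈ Finset.range (m + 1 + 1),
          η * deriv (fun x : ℝ => (P x (m + 1)).coeff i) η
            * ∑' k : ℕ, (k : ℝ) ^ (i + m') * v k * η ^ k := by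
      rw [show (fun k : ℕ => Qp.eval (k : ℝ) * (k : ℝ) ^ m' * v k * η ^ k)
          = fun k : ℕ => (∑ i ∈ Finset.range (m + 1 + 1),
            η * deriv (fun x : ℝ => (P x (m + 1)).coeff i) η * (k : ℝ) ^ i)
              * (k : ℝ) ^ m' * v k * η ^ k from funext fun k => by rw [hQev]]
      exact todaAux_tsum_c v hconv _ _ m' hη
    have e2 : ∑' k : ℕ, (P η (m + 1)).eval (k : ℝ) * (k : ℝ) ^ (m' + 1) * v k * η ^ k
        = ∑ i ∈ Finset.range (m + 1 + 1),
          (P η (m + 1)).coeff i * ∑' k : ℕ, (k : ℝ) ^ (i + m' + 1) * v k * η ^ k := by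
      have h := todaAux_mom v hconv (P η (m + 1)) (m' + 1) hη
      rw [(hmonic η hη (m + 1)).2] at h
      simp only [← add_assoc] at h
      exact h
    have hE' := hE m' hm'
    rw [Finset.sum_add_distrib] at hE'
    rw [e1, e2]
    linarith
  -- the remainder polynomial
  obtain ⟨Rp, hRp⟩ : ∃ r : Polynomial ℝ, r = Qp + C (γ (m + 1) η) * P η m := ⟨_, rfl⟩
  have hSR : ∀ m' ≤ m, ∑' k : ℕ, Rp.eval (k : ℝ) * (k : ℝ) ^ m' * v k * η ^ k = 0 := by
    intro m' hm'
    have hsplit : ∀ k : ℕ, Rp.eval (k : ℝ) * (k : ℝ) ^ m' * v k * η ^ k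
        = Qp.eval (k : ℝ) * (k : ℝ) ^ m' * v k * η ^ k
          + γ (m + 1) η * ((P η m).eval (k : ℝ) * (k : ℝ) ^ m' * v k * η ^ k) := by
      intro k
      rw [hRp]
      simp only [Polynomial.eval_add, Polynomial.eval_mul, Polynomial.eval_C]
      ring
    rw [tsum_congr hsplit, Summable.tsum_add (hsumm Qp m') ((hsumm (P η m) m').mul_left _),
      tsum_mul_left]
    rcases lt_or_eq_of_le hm' with h | h
    · rw [hSQ m' (by omega), horth η hη (m + 1) (m' + 1) (by omega), horth η hη m m' h]
      simp
    · subst h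
      rw [hSQ m' (by omega), hγeq]
      ring
  have hRtop : deriv (fun x : ℝ => (P x (m + 1)).coeff (m + 1)) η = 0 := by
    have hev : (fun x : ℝ => (P x (m + 1)).coeff (m + 1)) =ᶠ[nhds η] fun _ => (1 : ℝ) :=
      Filter.eventuallyEq_of_mem (Ioi_mem_nhds hη) (fun x hx => by
        have h := hmonic x hx (m + 1)
        have hc := h.1.coeff_natDegree
        rwa [h.2] at hc)
    rw [hev.deriv_eq, deriv_const]
  have hRdeg : Rp.natDegree ≤ m := by
    refine Polynomial.natDegree_le_iff_coeff_eq_zero.mpr fun N hN => ?_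
    rw [hRp, Polynomial.coeff_add, Polynomial.coeff_C_mul]
    have h2 : (P η m).coeff N = 0 :=
      Polynomial.coeff_eq_zero_of_natDegree_lt (by rw [(hmonic η hη m).2]; omega)
    rcases lt_or_ge N (m + 1 + 1) with h | h
    · have hNm : N = m + 1 := by omega
      subst hNm
      rw [hQc1 _ h, hRtop, h2]
      ring
    · rw [hQc2 _ h, h2]
      ring
  have hR0 : Rp = 0 := by
    by_contra hne
    have hp := todaAux_pos v hv hconv Rp hne hη
    have hz : ∑' k : ℕ, (Rp * Rp).eval (k : ℝ) * (k : ℝ) ^ 0 * v k * η ^ k = 0 := by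
      rw [todaAux_expand v hconv Rp Rp hη]
      refine Finset.sum_eq_zero fun i hi => ?_
      have hi' : i ≤ m := by
        have := Finset.mem_range.mp hi
        omega
      rw [hSR i hi', mul_zero]
    rw [hz] at hp
    exact lt_irrefl 0 hp
  have hcoeffR : ∀ i, Qp.coeff i = -(γ (m + 1) η * (P η m).coeff i) := by
    intro i
    have h := congrArg (fun p : Polynomial ℝ => p.coeff i) hR0
    simp only [hRp, Polynomial.coeff_add, Polynomial.coeff_C_mul, Polynomial.coeff_zero] at h
    linarith
  have hpart1 : ∀ i : ℕ, η * deriv (fun x : ℝ => (P x (m + 1)).coeff i) η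
      = -γ (m + 1) η * (P η m).coeff i := by
    intro i
    rcases lt_or_ge i (m + 1 + 1) with h | h
    · rw [← hQc1 i h, hcoeffR i]
      ring
    · have hL : deriv (fun x : ℝ => (P x (m + 1)).coeff i) η = 0 := by
        have hev : (fun x : ℝ => (P x (m + 1)).coeff i) =ᶠ[nhds η] fun _ => (0 : ℝ) :=
          Filter.eventuallyEq_of_mem (Ioi_mem_nhds hη) (fun x hx =>
            Polynomial.coeff_eq_zero_of_natDegree_lt (by rw [(hmonic x hx (m + 1)).2]; omega))
        rw [hev.deriv_eq, deriv_const]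
      rw [hL, mul_zero,
        Polynomial.coeff_eq_zero_of_natDegree_lt (by rw [(hmonic η hη m).2]; omega), mul_zero]
  refine ⟨hpart1, ?_⟩
  have hfn : p1 (m + 1) = fun x : ℝ => (P x (m + 1)).coeff m := by
    funext x
    rw [hp1]
    simp
  have hc : (P η m).coeff m = 1 := by
    have := (hmonic η hη m).1.coeff_natDegree
    rwa [(hmonic η hη m).2] at this
  rw [hfn, hpart1 m, hc, mul_one]
end
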